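/- arXiv:0705.3820 — 3 statements merged into one kernel-verified Lean document; each statement's English description precedes it below -/
import Mathlib

section
/- If a and b realize the diameter of a finite point set S ⊂ ℝ² (no three points collinear) and r ∈ S \ {a,b}, then the angle ∠arb at r is at least π/3. -/
open EuclideanGeometry

abbrev Pt := EuclideanSpace ℝ (Fin 2)

/-- No three points of `S` are collinear. -/
def GenPos (S : Finset Pt) : Prop :=
  ∀ p ∈ S, ∀ q ∈ S, ∀ r ∈ S, p ≠ q → p ≠ r → q ≠ r →
    ¬ Collinear ℝ ({p, q, r} : Set Pt)

/-- If `a` and `b` realize the diameter of a finite point set `S` in general position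
and `r ∈ S \ {a, b}`, then the angle `∠ a r b` is at least `π / 3`. -/
theorem stmt2 (S : Finset Pt) (hgp : GenPos S) (a b r : Pt)
    (ha : a ∈ S) (hb : b ∈ S) (hr : r ∈ S) (hab : a ≠ b)
    (hdiam : ∀ x ∈ S, ∀ y ∈ S, dist x y ≤ dist a b)
    (hra : r ≠ a) (hrb : r ≠ b) :
    Real.pi / 3 ≤ ∠ a r b := by
  have hra' : (0:ℝ) < dist r a := dist_pos.mpr hra
  have hrb' : (0:ℝ) < dist r b := dist_pos.mpr hrb
  have h1 : dist r a ≤ dist a b := hdiam r hr a ha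
  have h2 : dist r b ≤ dist a b := hdiam r hr b hb
  have hlaw := EuclideanGeometry.law_cos a r b
  rw [dist_comm a r, dist_comm b r] at hlaw
  have hcos : Real.cos (∠ a r b) ≤ 1 / 2 := by nlinarith [mul_pos hra' hrb', sq_nonneg (dist r a - dist r b), mul_le_mul h1 h2 hrb'.le (dist_nonneg.trans h1)]
  by_contra hlt
  push_neg at hlt
  have hnn := EuclideanGeometry.angle_nonneg a r b
  have hle := EuclideanGeometry.angle_le_pi a r b
  have : Real.cos (∠ a r b) > Real.cos (Real.pi / 3) := by
    apply Real.strictAntiOn_cos ⟨hnn, hle⟩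
      ⟨by positivity, by linarith [Real.pi_pos]⟩ hlt
  rw [Real.cos_pi_div_three] at this
  linarith
end

section
/- For every n there exists a point set S of n points in general position such that every triangulation T of S has some vertex p with maximum incident angle at most 2π/3 + ε (for any prescribed ε > 0); hence the bound 2π/3 for triangulations is tight. -/
open scoped Classical
open EuclideanGeometry

noncomputable section

/-- A plane straight-line graph on the finite point set `S`: vertices are points of `S`,
edges are recorded as ordered pairs closed under swapping, and two edges that are not
the same unordered pair may only meet at common endpoints. -/
structure PSLG (S : Finset Pt) where
  E : Finset (Pt × Pt)
  symm : ∀ e ∈ E, (e.2, e.1) ∈ E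
  endpts : ∀ e ∈ E, e.1 ∈ S ∧ e.2 ∈ S
  ne : ∀ e ∈ E, e.1 ≠ e.2
  noncross : ∀ e ∈ E, ∀ f ∈ E, e ≠ f → e ≠ (f.2, f.1) →
    ∀ x, x ∈ segment ℝ e.1 e.2 → x ∈ segment ℝ f.1 f.2 →
      (x = e.1 ∨ x = e.2) ∧ (x = f.1 ∨ x = f.2)

/-- The degree of the point `p` in `G`. -/
def PSLG.deg {S : Finset Pt} (G : PSLG S) (p : Pt) : ℕ :=
  (G.E.filter fun e => e.1 = p).card

/-- The point `p` has an incident angle of size at least `φ` in `G`: all edge directions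
at `p` fit in a closed cone of half-angle `π - φ / 2` (for `p` of degree ≤ 1 the maximum
incident angle is `2π`, and this condition holds trivially). -/
def VertexOpen {S : Finset Pt} (G : PSLG S) (p : Pt) (φ : ℝ) : Prop :=
  ∃ d : Pt, d ≠ 0 ∧ ∀ q : Pt, (p, q) ∈ G.E →
    InnerProductGeometry.angle d (q - p) ≤ Real.pi - φ / 2

/-- `G` is `φ`-open: every vertex has an incident angle of size at least `φ`. -/
def PSLG.IsPhiOpen {S : Finset Pt} (G : PSLG S) (φ : ℝ) : Prop :=
  ∀ p ∈ S, VertexOpen G p φ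

/-- `G` is connected on `S`. -/
def PSLG.Connected {S : Finset Pt} (G : PSLG S) : Prop :=
  ∀ p ∈ S, ∀ q ∈ S, Relation.ReflTransGen (fun a b => (a, b) ∈ G.E) p q

/-- `G` is a spanning tree of `S`: connected and with the minimum possible number of
edges (each undirected edge is recorded twice). -/
def PSLG.IsSpanningTree {S : Finset Pt} (G : PSLG S) : Prop :=
  G.Connected ∧ G.E.card = 2 * (S.card - 1)

/-- `G` is a (non-crossing Hamiltonian) spanning path of `S`: a spanning tree of maximum
vertex degree at most two. -/
def PSLG.IsSpanningPath {S : Finset Pt} (G : PSLG S) : Prop :=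
  G.IsSpanningTree ∧ ∀ p ∈ S, G.deg p ≤ 2

/-- `S` is in convex position. -/
def ConvexPos (S : Finset Pt) : Prop :=
  ∀ p ∈ S, p ∉ convexHull ℝ (↑(S.erase p) : Set Pt)

/-- `G` is a triangulation of `S`: a maximal plane straight-line graph, i.e. any further
edge between points of `S` would cross the existing graph. -/
def PSLG.IsTriangulation {S : Finset Pt} (G : PSLG S) : Prop :=
  ∀ p ∈ S, ∀ q ∈ S, p ≠ q → (p, q) ∉ G.E →
    ∃ e ∈ G.E, ∃ x, x ∈ segment ℝ p q ∧ x ∈ segment ℝ e.1 e.2 ∧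
      ¬((x = p ∨ x = q) ∧ (x = e.1 ∨ x = e.2))

end

noncomputable section

open scoped RealInnerProductSpace

/-- the signed area determinant -/
def Dt (u v w : Pt) : ℝ :=
  (v 0 - u 0) * (w 1 - u 1) - (v 1 - u 1) * (w 0 - u 0)

lemma Dt_swap (u v w : Pt) : Dt u v w = - Dt u w v := by unfold Dt; ring
lemma Dt_rot (u v w : Pt) : Dt u v w = Dt v w u := by unfold Dt; ring

lemma noncol {u v w : Pt} (h : Dt u v w ≠ 0) : ¬ Collinear ℝ ({u, v, w} : Set Pt) := by
  intro hc
  rw [collinear_iff_of_mem (Set.mem_insert u _)] at hc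
  obtain ⟨dir, hdir⟩ := hc
  obtain ⟨tv, hv⟩ := hdir v (by simp)
  obtain ⟨tw, hw⟩ := hdir w (by simp)
  apply h
  have hv0 : v 0 = tv * dir 0 + u 0 := by rw [hv]; rfl
  have hv1 : v 1 = tv * dir 1 + u 1 := by rw [hv]; rfl
  have hw0 : w 0 = tw * dir 0 + u 0 := by rw [hw]; rfl
  have hw1 : w 1 = tw * dir 1 + u 1 := by rw [hw]; rfl
  unfold Dt
  rw [hv0, hv1, hw0, hw1]; ring

/-- extraction of a segment membership into a single parameter -/
lemma seg_comb {A B x : Pt} (h : x ∈ segment ℝ A B) :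
    ∃ t : ℝ, 0 ≤ t ∧ t ≤ 1 ∧ x 0 = A 0 + t * (B 0 - A 0) ∧ x 1 = A 1 + t * (B 1 - A 1) := by
  obtain ⟨a, b, ha, hb, hab, hx⟩ := h
  refine ⟨b, hb, by linarith, ?_, ?_⟩
  · have h : x 0 = a * A 0 + b * B 0 := by rw [← hx]; rfl
    rw [h]; linear_combination A 0 * hab
  · have h : x 1 = a * A 1 + b * B 1 := by rw [← hx]; rfl
    rw [h]; linear_combination A 1 * hab

lemma convex_lt {fa fb t c : ℝ} (h1 : fa < c) (h2 : fb < c) (h3 : 0 ≤ t) (h4 : t ≤ 1) :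
    fa + t * (fb - fa) < c := by
  rcases le_total t (1/2) with h | h
  · nlinarith
  · nlinarith

lemma sep_line (a b c : ℝ) {P Q U V x : Pt}
    (hP : a * P 0 + b * P 1 < c) (hQ : a * Q 0 + b * Q 1 < c)
    (hU : c < a * U 0 + b * U 1) (hV : c < a * V 0 + b * V 1)
    (h1 : x ∈ segment ℝ P Q) (h2 : x ∈ segment ℝ U V) : False := by
  obtain ⟨t, ht0, ht1, hx0, hx1⟩ := seg_comb h1
  obtain ⟨s, hs0, hs1, hy0, hy1⟩ := seg_comb h2
  have e1 : a * x 0 + b * x 1 < c := by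
    calc a * x 0 + b * x 1
        = (a * P 0 + b * P 1) + t * ((a * Q 0 + b * Q 1) - (a * P 0 + b * P 1)) := by
          rw [hx0, hx1]; ring
      _ < c := convex_lt hP hQ ht0 ht1
  have e2 : -(a * x 0 + b * x 1) < -c := by
    have hUV : -(a * U 0 + b * U 1) < -c := by linarith
    have hVV : -(a * V 0 + b * V 1) < -c := by linarith
    calc -(a * x 0 + b * x 1)
        = -(a * U 0 + b * U 1) + s * (-(a * V 0 + b * V 1) - -(a * U 0 + b * U 1)) := by
          rw [hy0, hy1]; ring
      _ < -c := convex_lt hUV hVV hs0 hs1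
  linarith

lemma shared_pt {A U V x : Pt}
    (hdet : Dt A U V ≠ 0)
    (h1 : x ∈ segment ℝ A U) (h2 : x ∈ segment ℝ A V) : x = A := by
  unfold Dt at hdet
  obtain ⟨t, ht0, ht1, hx0, hx1⟩ := seg_comb h1
  obtain ⟨s, hs0, hs1, hy0, hy1⟩ := seg_comb h2
  have e0 : t * (U 0 - A 0) = s * (V 0 - A 0) := by linarith
  have e1 : t * (U 1 - A 1) = s * (V 1 - A 1) := by linarith
  have key : t * ((U 0 - A 0) * (V 1 - A 1) - (U 1 - A 1) * (V 0 - A 0)) = 0 := by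
    linear_combination (V 1 - A 1) * e0 - (V 0 - A 0) * e1
  have ht : t = 0 := by
    rcases mul_eq_zero.1 key with h | h
    · exact h
    · exact absurd h hdet
  subst ht
  ext i
  fin_cases i
  · simpa using hx0
  · simpa using hx1

/-- the point family -/
def Fp (δ μ : ℝ) (i : ℕ) : Pt :=
  if i = 0 then WithLp.toLp 2 ![0, 0]
  else if i = 1 then WithLp.toLp 2 ![-(1/2), Real.sqrt 3 / 2]
  else if i = 2 then WithLp.toLp 2 ![-(1/2), -(Real.sqrt 3 / 2)]
  else WithLp.toLp 2 ![1 + ((i - 2 : ℕ) : ℝ) * δ, μ * ((i - 2 : ℕ) : ℝ)^2]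

lemma Fp_zero (δ μ : ℝ) : Fp δ μ 0 = WithLp.toLp 2 ![0, 0] := rfl
lemma Fp_one (δ μ : ℝ) : Fp δ μ 1 = WithLp.toLp 2 ![-(1/2), Real.sqrt 3 / 2] := rfl
lemma Fp_two (δ μ : ℝ) : Fp δ μ 2 = WithLp.toLp 2 ![-(1/2), -(Real.sqrt 3 / 2)] := rfl
lemma Fp_cl (δ μ : ℝ) (m : ℕ) :
    Fp δ μ (m + 3) = WithLp.toLp 2 ![1 + ((m + 1 : ℕ) : ℝ) * δ, μ * ((m + 1 : ℕ) : ℝ)^2] := by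
  have h2 : m + 3 - 2 = m + 1 := by omega
  simp only [Fp, h2]
  rw [if_neg (by omega : ¬ (m + 3 = 0)), if_neg (by omega : ¬ (m + 3 = 1)),
    if_neg (by omega : ¬ (m + 3 = 2))]


lemma s2 : Real.sqrt 3 ^ 2 = 3 := Real.sq_sqrt (by norm_num)
lemma s_pos : 0 < Real.sqrt 3 := Real.sqrt_pos.2 (by norm_num)
lemma s_gt : 1.7 < Real.sqrt 3 := by nlinarith [s2, Real.sqrt_nonneg 3]
lemma s_lt : Real.sqrt 3 < 1.8 := by nlinarith [s2, Real.sqrt_nonneg 3]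

lemma cl_facts {n : ℕ} {δ μ : ℝ} (hn : 4 ≤ n) (hδ : 0 < δ) (hδn : (n:ℝ) * δ ≤ 1/16)
    (hμ : 0 < μ) (hμn : μ * (n:ℝ)^2 ≤ δ/8) (m : ℕ) (hm : m + 3 < n) :
    (1:ℝ) ≤ (m:ℝ) + 1 ∧ ((m:ℝ) + 1) * δ ≤ 1/16 ∧ μ * ((m:ℝ) + 1)^2 ≤ δ/8 ∧
      μ * ((m:ℝ) + 1) ≤ δ/32 := by
  have hm0 : (0:ℝ) ≤ (m:ℝ) := Nat.cast_nonneg m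
  have hbn : (m:ℝ) + 1 ≤ (n:ℝ) := by exact_mod_cast Nat.succ_le_of_lt (by omega)
  have hn4 : (4:ℝ) ≤ (n:ℝ) := by exact_mod_cast hn
  have hnn : (0:ℝ) ≤ (n:ℝ) := by linarith
  refine ⟨by linarith, ?_, ?_, ?_⟩
  · nlinarith [mul_le_mul_of_nonneg_right hbn hδ.le]
  · nlinarith [mul_le_mul hbn hbn (by linarith) hnn, hμ.le,
      mul_le_mul_of_nonneg_left (mul_le_mul hbn hbn (by linarith) hnn) hμ.le]
  · -- μ (m+1) ≤ μ n ≤ δ/32 since 4 μ n ≤ μ n²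
    nlinarith [mul_le_mul_of_nonneg_left hbn hμ.le, mul_nonneg (mul_nonneg hμ.le hnn)
      (by linarith : (0:ℝ) ≤ (n:ℝ) - 4)]

lemma hδ64 {n : ℕ} {δ : ℝ} (hn : 4 ≤ n) (hδ : 0 < δ) (hδn : (n:ℝ) * δ ≤ 1/16) : δ ≤ 1/64 := by
  have hn4 : (4:ℝ) ≤ (n:ℝ) := by exact_mod_cast hn
  nlinarith

set_option maxHeartbeats 2000000 in
lemma detD_sorted {n : ℕ} {δ μ : ℝ} (hn : 4 ≤ n) (hδ : 0 < δ) (hδn : (n:ℝ) * δ ≤ 1/16)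
    (hμ : 0 < μ) (hμn : μ * (n:ℝ)^2 ≤ δ/8) :
    ∀ i j k : ℕ, i < j → j < k → k < n → Dt (Fp δ μ i) (Fp δ μ j) (Fp δ μ k) ≠ 0 := by
  intro i j k hij hjk hkn
  have hd64 := hδ64 hn hδ hδn
  rcases Nat.lt_or_ge k 3 with hk3 | hk3
  · -- (0,1,2)
    obtain ⟨rfl, rfl, rfl⟩ : i = 0 ∧ j = 1 ∧ k = 2 := by omega
    simp only [Fp_zero, Fp_one, Fp_two, Dt, Matrix.cons_val_zero, Matrix.cons_val_one,
      Matrix.head_cons]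
    apply ne_of_gt
    linarith [s_gt]
  obtain ⟨mk, rfl⟩ : ∃ m, k = m + 3 := ⟨k - 3, by omega⟩
  obtain ⟨hc1, hcδ, hcμ2, hcμ⟩ := cl_facts hn hδ hδn hμ hμn mk hkn
  have hC0 : (0:ℝ) < (mk:ℝ) + 1 := by positivity
  rcases Nat.lt_or_ge j 3 with hj3 | hj3
  · rcases (by omega : (i = 0 ∧ j = 1) ∨ (i = 0 ∧ j = 2) ∨ (i = 1 ∧ j = 2)) with
      ⟨rfl, rfl⟩ | ⟨rfl, rfl⟩ | ⟨rfl, rfl⟩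
    · -- (0,1,c) : negative
      simp only [Fp_zero, Fp_one, Fp_cl, Dt, Matrix.cons_val_zero, Matrix.cons_val_one,
        Matrix.head_cons]
      push_cast
      apply ne_of_lt
      linarith [s_gt, mul_pos hμ (mul_pos hC0 hC0), mul_pos (mul_pos s_pos hC0) hδ]
    · -- (0,2,c) : positive
      simp only [Fp_zero, Fp_two, Fp_cl, Dt, Matrix.cons_val_zero, Matrix.cons_val_one,
        Matrix.head_cons]
      push_cast
      apply ne_of_gt
      have h1 : μ * (((mk:ℝ) + 1) * ((mk:ℝ) + 1)) ≤ δ/8 := by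
        have : ((mk:ℝ) + 1) * ((mk:ℝ) + 1) = ((mk:ℝ) + 1)^2 := by ring
        rw [this]; exact hcμ2
      linarith [s_gt, h1, mul_pos (mul_pos s_pos hC0) hδ]
    · -- (1,2,c) : positive
      simp only [Fp_one, Fp_two, Fp_cl, Dt, Matrix.cons_val_zero, Matrix.cons_val_one,
        Matrix.head_cons]
      push_cast
      apply ne_of_gt
      linarith [s_gt, mul_pos (mul_pos s_pos hC0) hδ]
  -- j is a cluster point
  obtain ⟨mj, rfl⟩ : ∃ m, j = m + 3 := ⟨j - 3, by omega⟩
  obtain ⟨hb1, hbδ, hbμ2, hbμ⟩ := cl_facts hn hδ hδn hμ hμn mj (by omega)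
  have hB0 : (0:ℝ) < (mj:ℝ) + 1 := by positivity
  have hbc : (mj:ℝ) + 1 < (mk:ℝ) + 1 := by
    have : (mj:ℝ) < (mk:ℝ) := by exact_mod_cast (by omega : mj < mk)
    linarith
  have h1 : (0:ℝ) < ((mk:ℝ) + 1) - ((mj:ℝ) + 1) := by linarith
  rcases Nat.lt_or_ge i 3 with hi3 | hi3
  · rcases (by omega : i = 0 ∨ i = 1 ∨ i = 2) with rfl | rfl | rfl
    · -- (0, b, c)
      simp only [Fp_zero, Fp_cl, Dt, Matrix.cons_val_zero, Matrix.cons_val_one,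
        Matrix.head_cons]
      push_cast
      apply ne_of_gt
      have h2 : (0:ℝ) < ((mk:ℝ)+1) + ((mj:ℝ)+1) + ((mj:ℝ)+1) * ((mk:ℝ)+1) * δ := by
        have := mul_pos (mul_pos hB0 hC0) hδ
        linarith
      linarith [mul_pos (mul_pos hμ h1) h2]
    · -- (1, b, c)
      simp only [Fp_one, Fp_cl, Dt, Matrix.cons_val_zero, Matrix.cons_val_one,
        Matrix.head_cons]
      push_cast
      apply ne_of_gt
      have h2 : (0:ℝ) < (3/2) * μ * (((mk:ℝ)+1) + ((mj:ℝ)+1)) +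
          μ * δ * (((mj:ℝ)+1) * ((mk:ℝ)+1)) + Real.sqrt 3 * δ / 2 := by
        linarith [mul_pos hμ (by linarith : (0:ℝ) < ((mk:ℝ)+1) + ((mj:ℝ)+1)),
          mul_pos (mul_pos hμ hδ) (mul_pos hB0 hC0), mul_pos s_pos hδ]
      linarith [mul_pos h1 h2]
    · -- (2, b, c)
      simp only [Fp_two, Fp_cl, Dt, Matrix.cons_val_zero, Matrix.cons_val_one,
        Matrix.head_cons]
      push_cast
      apply ne_of_lt
      have hprod : μ * ((mj:ℝ)+1) * (((mk:ℝ)+1) * δ) ≤ (δ/32) * (1/16) :=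
        mul_le_mul hbμ hcδ (by positivity) (by linarith)
      have h2 : (0:ℝ) < Real.sqrt 3 * δ / 2 - (3/2) * μ * (((mk:ℝ)+1) + ((mj:ℝ)+1)) -
          μ * δ * (((mj:ℝ)+1) * ((mk:ℝ)+1)) := by
        have hsd : 1.7 * δ ≤ Real.sqrt 3 * δ := mul_le_mul_of_nonneg_right s_gt.le hδ.le
        linarith [hprod, hbμ, hcμ, hδ]
      linarith [mul_pos h1 h2]
  · -- (a, b, c) all clusters
    obtain ⟨mi, rfl⟩ : ∃ m, i = m + 3 := ⟨i - 3, by omega⟩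
    have hA0 : (0:ℝ) < (mi:ℝ) + 1 := by positivity
    have hab : (mi:ℝ) + 1 < (mj:ℝ) + 1 := by
      have : (mi:ℝ) < (mj:ℝ) := by exact_mod_cast (by omega : mi < mj)
      linarith
    simp only [Fp_cl, Dt, Matrix.cons_val_zero, Matrix.cons_val_one, Matrix.head_cons]
    push_cast
    apply ne_of_gt
    have h2 : (0:ℝ) < ((mj:ℝ)+1) - ((mi:ℝ)+1) := by linarith
    have h3 : (0:ℝ) < ((mk:ℝ)+1) - ((mi:ℝ)+1) := by linarith
    linarith [mul_pos (mul_pos (mul_pos (mul_pos hμ hδ) h2) h3) h1]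


lemma detD {n : ℕ} {δ μ : ℝ} (hn : 4 ≤ n) (hδ : 0 < δ) (hδn : (n:ℝ) * δ ≤ 1/16)
    (hμ : 0 < μ) (hμn : μ * (n:ℝ)^2 ≤ δ/8) (i j k : ℕ) (hi : i < n) (hj : j < n)
    (hk : k < n) (hij : i ≠ j) (hik : i ≠ k) (hjk : j ≠ k) :
    Dt (Fp δ μ i) (Fp δ μ j) (Fp δ μ k) ≠ 0 := by
  have H := detD_sorted hn hδ hδn hμ hμn
  rcases (by omega : (i < j ∧ j < k) ∨ (i < k ∧ k < j) ∨ (j < i ∧ i < k) ∨ (j < k ∧ k < i) ∨ (k < i ∧ i < j) ∨ (k < j ∧ j < i))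
    with ⟨h1,h2⟩|⟨h1,h2⟩|⟨h1,h2⟩|⟨h1,h2⟩|⟨h1,h2⟩|⟨h1,h2⟩
  · exact H i j k h1 h2 hk
  · rw [Dt_swap]; exact neg_ne_zero.2 (H i k j h1 h2 hj)
  · rw [Dt_rot, Dt_swap]; exact neg_ne_zero.2 (H j i k h1 h2 hk)
  · rw [Dt_rot]; exact H j k i h1 h2 hi
  · rw [Dt_rot, Dt_rot]; exact H k i j h1 h2 hj
  · rw [Dt_rot, Dt_rot, Dt_swap]; exact neg_ne_zero.2 (H k j i h1 h2 hi)

lemma Fp_ne {δ μ : ℝ} (hδ : 0 < δ) (hμ : 0 < μ) {i j : ℕ} (hij : i < j) :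
    Fp δ μ i ≠ Fp δ μ j := by
  intro h
  have h0 := congrArg (fun v : Pt => v 0) h
  have h1 := congrArg (fun v : Pt => v 1) h
  simp only at h0 h1
  rcases Nat.lt_or_ge j 3 with hj3 | hj3
  · rcases (by omega : (i = 0 ∧ j = 1) ∨ (i = 0 ∧ j = 2) ∨ (i = 1 ∧ j = 2)) with
      ⟨rfl, rfl⟩ | ⟨rfl, rfl⟩ | ⟨rfl, rfl⟩
    · rw [Fp_zero, Fp_one] at h0; norm_num at h0
    · rw [Fp_zero, Fp_two] at h0; norm_num at h0
    · rw [Fp_one, Fp_two] at h1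
      simp only [Matrix.cons_val_one, Matrix.head_cons, Matrix.cons_val_fin_one] at h1
      linarith [s_pos]
  obtain ⟨mj, rfl⟩ : ∃ m, j = m + 3 := ⟨j - 3, by omega⟩
  have hC0 : (0:ℝ) < (mj:ℝ) + 1 := by positivity
  rcases Nat.lt_or_ge i 3 with hi3 | hi3
  · rcases (by omega : i = 0 ∨ i = 1 ∨ i = 2) with rfl | rfl | rfl
    · rw [Fp_zero, Fp_cl] at h0
      simp only [Matrix.cons_val_zero] at h0
      push_cast at h0
      nlinarith [mul_pos hC0 hδ]
    · rw [Fp_one, Fp_cl] at h0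
      simp only [Matrix.cons_val_zero] at h0
      push_cast at h0
      nlinarith [mul_pos hC0 hδ]
    · rw [Fp_two, Fp_cl] at h0
      simp only [Matrix.cons_val_zero] at h0
      push_cast at h0
      nlinarith [mul_pos hC0 hδ]
  · obtain ⟨mi, rfl⟩ : ∃ m, i = m + 3 := ⟨i - 3, by omega⟩
    rw [Fp_cl, Fp_cl] at h0
    simp only [Matrix.cons_val_zero] at h0
    push_cast at h0
    have : (mi:ℝ) < (mj:ℝ) := by exact_mod_cast (by omega : mi < mj)
    nlinarith [mul_pos hδ (by linarith : (0:ℝ) < (mj:ℝ) - (mi:ℝ))]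

lemma Fp_inj {δ μ : ℝ} (hδ : 0 < δ) (hμ : 0 < μ) {i j : ℕ} (h : Fp δ μ i = Fp δ μ j) :
    i = j := by
  rcases lt_trichotomy i j with hlt | heq | hlt
  · exact absurd h (Fp_ne hδ hμ hlt)
  · exact heq
  · exact absurd h.symm (Fp_ne hδ hμ hlt)


lemma Fp3_0 (δ μ : ℝ) : (Fp δ μ 3) 0 = 1 + δ := by
  rw [show (3:ℕ) = 0 + 3 from rfl, Fp_cl]
  simp only [Matrix.cons_val_zero]
  norm_num

lemma Fp3_1 (δ μ : ℝ) : (Fp δ μ 3) 1 = μ := by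
  rw [show (3:ℕ) = 0 + 3 from rfl, Fp_cl]
  simp only [Matrix.cons_val_one, Matrix.head_cons]
  norm_num

def Spts (n : ℕ) (δ μ : ℝ) : Finset Pt := (Finset.range n).image (Fp δ μ)

lemma mem_Spts {n : ℕ} {δ μ : ℝ} (i : ℕ) (hi : i < n) : Fp δ μ i ∈ Spts n δ μ :=
  Finset.mem_image.2 ⟨i, Finset.mem_range.2 hi, rfl⟩

set_option maxHeartbeats 2000000 in
lemma force1 {n : ℕ} {δ μ : ℝ} (hn : 4 ≤ n) (hδ : 0 < δ) (hδn : (n:ℝ) * δ ≤ 1/16)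
    (hμ : 0 < μ) (hμn : μ * (n:ℝ)^2 ≤ δ/8) (T : PSLG (Spts n δ μ))
    (hT : T.IsTriangulation) : (Fp δ μ 0, Fp δ μ 1) ∈ T.E := by
  have hd64 := hδ64 hn hδ hδn
  by_contra hne
  obtain ⟨e, heE, x, hx1, hx2, hxw⟩ := hT _ (mem_Spts 0 (by omega)) _ (mem_Spts 1 (by omega))
    (Fp_ne hδ hμ (by omega)) hne
  obtain ⟨u, v⟩ := e
  obtain ⟨i, hiR, hFi⟩ := Finset.mem_image.1 (T.endpts _ heE).1
  obtain ⟨j, hjR, hFj⟩ := Finset.mem_image.1 (T.endpts _ heE).2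
  rw [Finset.mem_range] at hiR hjR
  simp only at hFi hFj hx2 ⊢
  subst hFi; subst hFj
  have hij : i ≠ j := fun h => T.ne _ heE (by simp [h])
  apply hxw
  simp only
  have hD := detD (n := n) (δ := δ) (μ := μ) hn hδ hδn hμ hμn
  rcases (by omega : (i = 0) ∨ (j = 0 ∧ i ≠ 0) ∨ (i = 1 ∧ j ≠ 0) ∨ (j = 1 ∧ i ≠ 0 ∧ i ≠ 1)
      ∨ (2 ≤ i ∧ 2 ≤ j)) with rfl | ⟨rfl, hi0⟩ | ⟨rfl, hj0⟩ | ⟨rfl, hi0, hi1⟩ | ⟨hi2, hj2⟩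
  · -- e.1 = p
    rcases eq_or_ne j 1 with rfl | hj1
    · exact absurd heE hne
    · have hx0 : x = Fp δ μ 0 :=
        shared_pt (hD 0 1 j (by omega) (by omega) hjR (by omega) hij
          (fun h => hj1 h.symm)) hx1 hx2
      exact ⟨Or.inl hx0, Or.inl hx0⟩
  · -- e.2 = p
    rw [segment_symm] at hx2
    rcases eq_or_ne i 1 with rfl | hi1
    · exact absurd (T.symm _ heE) hne
    · have hx0 : x = Fp δ μ 0 :=
        shared_pt (hD 0 1 i (by omega) (by omega) hiR (by omega) (fun h => hi0 h.symm)
          (fun h => hi1 h.symm)) hx1 hx2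
      exact ⟨Or.inl hx0, Or.inr hx0⟩
  · -- e.1 = B
    rw [segment_symm] at hx1
    have hx0 : x = Fp δ μ 1 :=
      shared_pt (hD 1 0 j (by omega) (by omega) hjR (by omega) hij
        (fun h => hj0 h.symm)) hx1 hx2
    exact ⟨Or.inr hx0, Or.inl hx0⟩
  · -- e.2 = B
    rw [segment_symm] at hx1 hx2
    have hx0 : x = Fp δ μ 1 :=
      shared_pt (hD 1 0 i (by omega) (by omega) hiR (by omega) (fun h => hi1 h.symm)
        (fun h => hi0 h.symm)) hx1 hx2
    exact ⟨Or.inr hx0, Or.inr hx0⟩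
  · -- separation cases
    exfalso
    have hsep2cl : ∀ m : ℕ, m + 3 < n → ∀ y : Pt, y ∈ segment ℝ (Fp δ μ 2) (Fp δ μ (m+3)) →
        y ∈ segment ℝ (Fp δ μ 0) (Fp δ μ 1) → False := by
      intro m hm y hy1 hy2
      obtain ⟨hc1, hcδ, hcμ2, hcμ⟩ := cl_facts hn hδ hδn hμ hμn m hm
      have hC0 : (0:ℝ) < (m:ℝ) + 1 := by positivity
      refine sep_line (-1) 1 ((1 - Real.sqrt 3)/4) ?_ ?_ ?_ ?_ hy1 hy2
      · simp only [Fp_two, Matrix.cons_val_zero, Matrix.cons_val_one, Matrix.head_cons]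
        linarith [s_gt]
      · simp only [Fp_cl, Matrix.cons_val_zero, Matrix.cons_val_one, Matrix.head_cons]
        push_cast
        have h1 : μ * (((m:ℝ) + 1) * ((m:ℝ) + 1)) ≤ δ/8 := by
          have h2 : ((m:ℝ) + 1) * ((m:ℝ) + 1) = ((m:ℝ) + 1)^2 := by ring
          rw [h2]; exact hcμ2
        nlinarith [s_lt, mul_pos hC0 hδ]
      · simp only [Fp_zero, Matrix.cons_val_zero, Matrix.cons_val_one, Matrix.head_cons]
        linarith [s_gt]
      · simp only [Fp_one, Matrix.cons_val_zero, Matrix.cons_val_one, Matrix.head_cons]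
        linarith [s_gt]
    rcases (by omega : (i = 2 ∧ 3 ≤ j) ∨ (j = 2 ∧ 3 ≤ i) ∨ (3 ≤ i ∧ 3 ≤ j)) with
      ⟨rfl, hj3⟩ | ⟨rfl, hi3⟩ | ⟨hi3, hj3⟩
    · obtain ⟨mj, rfl⟩ : ∃ m, j = m + 3 := ⟨j - 3, by omega⟩
      exact hsep2cl mj hjR x hx2 hx1
    · obtain ⟨mi, rfl⟩ : ∃ m, i = m + 3 := ⟨i - 3, by omega⟩
      rw [segment_symm] at hx2
      exact hsep2cl mi hiR x hx2 hx1
    · obtain ⟨mi, rfl⟩ : ∃ m, i = m + 3 := ⟨i - 3, by omega⟩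
      obtain ⟨mj, rfl⟩ : ∃ m, j = m + 3 := ⟨j - 3, by omega⟩
      obtain ⟨hb1, hbδ, hbμ2, hbμ⟩ := cl_facts hn hδ hδn hμ hμn mi hiR
      obtain ⟨hc1, hcδ, hcμ2, hcμ⟩ := cl_facts hn hδ hδn hμ hμn mj hjR
      have hB0 : (0:ℝ) < (mi:ℝ) + 1 := by positivity
      have hC0 : (0:ℝ) < (mj:ℝ) + 1 := by positivity
      refine sep_line 1 0 (1/2) ?_ ?_ ?_ ?_ hx1 hx2
      · simp only [Fp_zero, Matrix.cons_val_zero, Matrix.cons_val_one, Matrix.head_cons]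
        norm_num
      · simp only [Fp_one, Matrix.cons_val_zero, Matrix.cons_val_one, Matrix.head_cons]
        norm_num
      · simp only [Fp_cl, Matrix.cons_val_zero, Matrix.cons_val_one, Matrix.head_cons]
        push_cast
        nlinarith [mul_pos hB0 hδ]
      · simp only [Fp_cl, Matrix.cons_val_zero, Matrix.cons_val_one, Matrix.head_cons]
        push_cast
        nlinarith [mul_pos hC0 hδ]



set_option maxHeartbeats 2000000 in
lemma force2 {n : ℕ} {δ μ : ℝ} (hn : 4 ≤ n) (hδ : 0 < δ) (hδn : (n:ℝ) * δ ≤ 1/16)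
    (hμ : 0 < μ) (hμn : μ * (n:ℝ)^2 ≤ δ/8) (T : PSLG (Spts n δ μ))
    (hT : T.IsTriangulation) : (Fp δ μ 0, Fp δ μ 2) ∈ T.E := by
  have hd64 := hδ64 hn hδ hδn
  by_contra hne
  obtain ⟨e, heE, x, hx1, hx2, hxw⟩ := hT _ (mem_Spts 0 (by omega)) _ (mem_Spts 2 (by omega))
    (Fp_ne hδ hμ (by omega)) hne
  obtain ⟨u, v⟩ := e
  obtain ⟨i, hiR, hFi⟩ := Finset.mem_image.1 (T.endpts _ heE).1
  obtain ⟨j, hjR, hFj⟩ := Finset.mem_image.1 (T.endpts _ heE).2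
  rw [Finset.mem_range] at hiR hjR
  simp only at hFi hFj hx2 ⊢
  subst hFi; subst hFj
  have hij : i ≠ j := fun h => T.ne _ heE (by simp [h])
  apply hxw
  simp only
  have hD := detD (n := n) (δ := δ) (μ := μ) hn hδ hδn hμ hμn
  rcases (by omega : (i = 0) ∨ (j = 0 ∧ i ≠ 0) ∨ (i = 2 ∧ j ≠ 0) ∨ (j = 2 ∧ i ≠ 0 ∧ i ≠ 2)
      ∨ (i ≠ 0 ∧ i ≠ 2 ∧ j ≠ 0 ∧ j ≠ 2)) with
    rfl | ⟨rfl, hi0⟩ | ⟨rfl, hj0⟩ | ⟨rfl, hi0, hi2⟩ | ⟨hi0, hi2, hj0, hj2⟩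
  · rcases eq_or_ne j 2 with rfl | hj2
    · exact absurd heE hne
    · have hx0 : x = Fp δ μ 0 :=
        shared_pt (hD 0 2 j (by omega) (by omega) hjR (by omega) hij
          (fun h => hj2 h.symm)) hx1 hx2
      exact ⟨Or.inl hx0, Or.inl hx0⟩
  · rw [segment_symm] at hx2
    rcases eq_or_ne i 2 with rfl | hi2
    · exact absurd (T.symm _ heE) hne
    · have hx0 : x = Fp δ μ 0 :=
        shared_pt (hD 0 2 i (by omega) (by omega) hiR (by omega) (fun h => hi0 h.symm)
          (fun h => hi2 h.symm)) hx1 hx2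
      exact ⟨Or.inl hx0, Or.inr hx0⟩
  · rw [segment_symm] at hx1
    have hx0 : x = Fp δ μ 2 :=
      shared_pt (hD 2 0 j (by omega) (by omega) hjR (by omega) hij
        (fun h => hj0 h.symm)) hx1 hx2
    exact ⟨Or.inr hx0, Or.inl hx0⟩
  · rw [segment_symm] at hx1 hx2
    have hx0 : x = Fp δ μ 2 :=
      shared_pt (hD 2 0 i (by omega) (by omega) hiR (by omega) (fun h => hi2 h.symm)
        (fun h => hi0 h.symm)) hx1 hx2
    exact ⟨Or.inr hx0, Or.inr hx0⟩
  · exfalso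
    have hsep1cl : ∀ m : ℕ, m + 3 < n → ∀ y : Pt, y ∈ segment ℝ (Fp δ μ 1) (Fp δ μ (m+3)) →
        y ∈ segment ℝ (Fp δ μ 0) (Fp δ μ 2) → False := by
      intro m hm y hy1 hy2
      obtain ⟨hc1, hcδ, hcμ2, hcμ⟩ := cl_facts hn hδ hδn hμ hμn m hm
      have hC0 : (0:ℝ) < (m:ℝ) + 1 := by positivity
      refine sep_line (-1) (-1) ((1 - Real.sqrt 3)/4) ?_ ?_ ?_ ?_ hy1 hy2
      · simp only [Fp_one, Matrix.cons_val_zero, Matrix.cons_val_one, Matrix.head_cons]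
        linarith [s_gt]
      · simp only [Fp_cl, Matrix.cons_val_zero, Matrix.cons_val_one, Matrix.head_cons]
        push_cast
        nlinarith [s_lt, mul_pos hC0 hδ, mul_pos hμ (mul_pos hC0 hC0)]
      · simp only [Fp_zero, Matrix.cons_val_zero, Matrix.cons_val_one, Matrix.head_cons]
        linarith [s_gt]
      · simp only [Fp_two, Matrix.cons_val_zero, Matrix.cons_val_one, Matrix.head_cons]
        linarith [s_gt]
    rcases (by omega : (i = 1 ∧ 3 ≤ j) ∨ (j = 1 ∧ 3 ≤ i) ∨ (3 ≤ i ∧ 3 ≤ j)) with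
      ⟨rfl, hj3⟩ | ⟨rfl, hi3⟩ | ⟨hi3, hj3⟩
    · obtain ⟨mj, rfl⟩ : ∃ m, j = m + 3 := ⟨j - 3, by omega⟩
      exact hsep1cl mj hjR x hx2 hx1
    · obtain ⟨mi, rfl⟩ : ∃ m, i = m + 3 := ⟨i - 3, by omega⟩
      rw [segment_symm] at hx2
      exact hsep1cl mi hiR x hx2 hx1
    · obtain ⟨mi, rfl⟩ : ∃ m, i = m + 3 := ⟨i - 3, by omega⟩
      obtain ⟨mj, rfl⟩ : ∃ m, j = m + 3 := ⟨j - 3, by omega⟩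
      obtain ⟨hb1, hbδ, hbμ2, hbμ⟩ := cl_facts hn hδ hδn hμ hμn mi hiR
      obtain ⟨hc1, hcδ, hcμ2, hcμ⟩ := cl_facts hn hδ hδn hμ hμn mj hjR
      have hB0 : (0:ℝ) < (mi:ℝ) + 1 := by positivity
      have hC0 : (0:ℝ) < (mj:ℝ) + 1 := by positivity
      refine sep_line 1 0 (1/2) ?_ ?_ ?_ ?_ hx1 hx2
      · simp only [Fp_zero, Matrix.cons_val_zero, Matrix.cons_val_one, Matrix.head_cons]
        norm_num
      · simp only [Fp_two, Matrix.cons_val_zero, Matrix.cons_val_one, Matrix.head_cons]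
        norm_num
      · simp only [Fp_cl, Matrix.cons_val_zero, Matrix.cons_val_one, Matrix.head_cons]
        push_cast
        nlinarith [mul_pos hB0 hδ]
      · simp only [Fp_cl, Matrix.cons_val_zero, Matrix.cons_val_one, Matrix.head_cons]
        push_cast
        nlinarith [mul_pos hC0 hδ]

set_option maxHeartbeats 2000000 in
lemma force3 {n : ℕ} {δ μ : ℝ} (hn : 4 ≤ n) (hδ : 0 < δ) (hδn : (n:ℝ) * δ ≤ 1/16)
    (hμ : 0 < μ) (hμn : μ * (n:ℝ)^2 ≤ δ/8) (T : PSLG (Spts n δ μ))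
    (hT : T.IsTriangulation) : (Fp δ μ 0, Fp δ μ 3) ∈ T.E := by
  have hd64 := hδ64 hn hδ hδn
  have hμδ : μ ≤ δ/128 := by
    have hn4 : (4:ℝ) ≤ (n:ℝ) := by exact_mod_cast hn
    nlinarith [mul_le_mul_of_nonneg_left (by nlinarith : (16:ℝ) ≤ (n:ℝ)^2) hμ.le]
  by_contra hne
  obtain ⟨e, heE, x, hx1, hx2, hxw⟩ := hT _ (mem_Spts 0 (by omega)) _ (mem_Spts 3 (by omega))
    (Fp_ne hδ hμ (by omega)) hne
  obtain ⟨u, v⟩ := e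
  obtain ⟨i, hiR, hFi⟩ := Finset.mem_image.1 (T.endpts _ heE).1
  obtain ⟨j, hjR, hFj⟩ := Finset.mem_image.1 (T.endpts _ heE).2
  rw [Finset.mem_range] at hiR hjR
  simp only at hFi hFj hx2 ⊢
  subst hFi; subst hFj
  have hij : i ≠ j := fun h => T.ne _ heE (by simp [h])
  apply hxw
  simp only
  have hD := detD (n := n) (δ := δ) (μ := μ) hn hδ hδn hμ hμn
  rcases (by omega : (i = 0) ∨ (j = 0 ∧ i ≠ 0) ∨ (i = 3 ∧ j ≠ 0) ∨ (j = 3 ∧ i ≠ 0 ∧ i ≠ 3)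
      ∨ (i ≠ 0 ∧ i ≠ 3 ∧ j ≠ 0 ∧ j ≠ 3)) with
    rfl | ⟨rfl, hi0⟩ | ⟨rfl, hj0⟩ | ⟨rfl, hi0, hi3⟩ | ⟨hi0, hi3, hj0, hj3⟩
  · rcases eq_or_ne j 3 with rfl | hj3
    · exact absurd heE hne
    · have hx0 : x = Fp δ μ 0 :=
        shared_pt (hD 0 3 j (by omega) (by omega) hjR (by omega) hij
          (fun h => hj3 h.symm)) hx1 hx2
      exact ⟨Or.inl hx0, Or.inl hx0⟩
  · rw [segment_symm] at hx2
    rcases eq_or_ne i 3 with rfl | hi3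
    · exact absurd (T.symm _ heE) hne
    · have hx0 : x = Fp δ μ 0 :=
        shared_pt (hD 0 3 i (by omega) (by omega) hiR (by omega) (fun h => hi0 h.symm)
          (fun h => hi3 h.symm)) hx1 hx2
      exact ⟨Or.inl hx0, Or.inr hx0⟩
  · rw [segment_symm] at hx1
    have hx0 : x = Fp δ μ 3 :=
      shared_pt (hD 3 0 j (by omega) (by omega) hjR (by omega) hij
        (fun h => hj0 h.symm)) hx1 hx2
    exact ⟨Or.inr hx0, Or.inl hx0⟩
  · rw [segment_symm] at hx1 hx2
    have hx0 : x = Fp δ μ 3 :=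
      shared_pt (hD 3 0 i (by omega) (by omega) hiR (by omega) (fun h => hi3 h.symm)
        (fun h => hi0 h.symm)) hx1 hx2
    exact ⟨Or.inr hx0, Or.inr hx0⟩
  · exfalso
    -- separation cases; i, j ∈ {1, 2} ∪ clusters ≥ 4
    have hsepBC : ∀ y : Pt, y ∈ segment ℝ (Fp δ μ 1) (Fp δ μ 2) →
        y ∈ segment ℝ (Fp δ μ 0) (Fp δ μ 3) → False := by
      intro y hy1 hy2
      refine sep_line 1 0 (-(1/4)) ?_ ?_ ?_ ?_ hy1 hy2
      · simp only [Fp_one, Matrix.cons_val_zero, Matrix.cons_val_one, Matrix.head_cons]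
        norm_num
      · simp only [Fp_two, Matrix.cons_val_zero, Matrix.cons_val_one, Matrix.head_cons]
        norm_num
      · simp only [Fp_zero, Matrix.cons_val_zero, Matrix.cons_val_one, Matrix.head_cons]
        norm_num
      · rw [Fp3_0]
        linarith [hδ]
    have hsep1cl : ∀ m : ℕ, 1 ≤ m → m + 3 < n →
        ∀ y : Pt, y ∈ segment ℝ (Fp δ μ 1) (Fp δ μ (m+3)) →
        y ∈ segment ℝ (Fp δ μ 0) (Fp δ μ 3) → False := by
      intro m hm1 hm y hy1 hy2
      obtain ⟨hc1, hcδ, hcμ2, hcμ⟩ := cl_facts hn hδ hδn hμ hμn m hm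
      have hC2 : (2:ℝ) ≤ (m:ℝ) + 1 := by
        have : (1:ℝ) ≤ (m:ℝ) := by exact_mod_cast hm1
        linarith
      refine sep_line (-μ) (1+δ) μ ?_ ?_ ?_ ?_ hy2 hy1
      · simp only [Fp_zero, Matrix.cons_val_zero, Matrix.cons_val_one, Matrix.head_cons]
        nlinarith [hμ]
      · rw [Fp3_0, Fp3_1]
        nlinarith [hμ]
      · simp only [Fp_one, Matrix.cons_val_zero, Matrix.cons_val_one, Matrix.head_cons]
        linarith [s_gt, mul_pos hδ s_pos, hμδ, hd64, hδ]
      · simp only [Fp_cl, Matrix.cons_val_zero, Matrix.cons_val_one, Matrix.head_cons]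
        push_cast
        -- μ ((1+δ)C² − (1+Cδ)) > μ with C ≥ 2
        have h1 : (0:ℝ) < ((m:ℝ)+1) * δ * (((m:ℝ)+1) - 1) := by
          have : (0:ℝ) < ((m:ℝ)+1) - 1 := by linarith
          positivity
        have hCsq : (4:ℝ) ≤ ((m:ℝ)+1) * ((m:ℝ)+1) := by nlinarith [hC2]
        have h2 : (0:ℝ) < (1+δ) * (((m:ℝ)+1) * ((m:ℝ)+1)) - (1 + ((m:ℝ)+1)*δ) - 1 := by
          nlinarith [h1, hCsq, mul_nonneg hδ.le (by linarith : (0:ℝ) ≤ ((m:ℝ)+1) * ((m:ℝ)+1))]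
        have key := mul_pos hμ h2
        nlinarith [key]
    have hsep2cl : ∀ m : ℕ, 1 ≤ m → m + 3 < n →
        ∀ y : Pt, y ∈ segment ℝ (Fp δ μ 2) (Fp δ μ (m+3)) →
        y ∈ segment ℝ (Fp δ μ 0) (Fp δ μ 3) → False := by
      intro m hm1 hm y hy1 hy2
      obtain ⟨hc1, hcδ, hcμ2, hcμ⟩ := cl_facts hn hδ hδn hμ hμn m hm
      have hC2 : (2:ℝ) ≤ (m:ℝ) + 1 := by
        have : (1:ℝ) ≤ (m:ℝ) := by exact_mod_cast hm1
        linarith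
      refine sep_line (-1) 2 (-(1+(3/2)*δ)) ?_ ?_ ?_ ?_ hy1 hy2
      · simp only [Fp_two, Matrix.cons_val_zero, Matrix.cons_val_one, Matrix.head_cons]
        linarith [s_gt, hd64]
      · simp only [Fp_cl, Matrix.cons_val_zero, Matrix.cons_val_one, Matrix.head_cons]
        push_cast
        -- 2μC² < (C − 3/2)δ
        have h1 : μ * (((m:ℝ)+1) * ((m:ℝ)+1)) ≤ δ/8 := by
          have h2 : ((m:ℝ)+1) * ((m:ℝ)+1) = ((m:ℝ)+1)^2 := by ring
          rw [h2]; exact hcμ2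
        linarith [h1, mul_nonneg hδ.le (by linarith : (0:ℝ) ≤ ((m:ℝ)+1) - 2), hδ]
      · simp only [Fp_zero, Matrix.cons_val_zero, Matrix.cons_val_one, Matrix.head_cons]
        linarith [hδ]
      · rw [Fp3_0, Fp3_1]
        linarith [hμ, hδ]
    have hsepclcl : ∀ mi mj : ℕ, 1 ≤ mi → mi + 3 < n → 1 ≤ mj → mj + 3 < n →
        ∀ y : Pt, y ∈ segment ℝ (Fp δ μ (mi+3)) (Fp δ μ (mj+3)) →
        y ∈ segment ℝ (Fp δ μ 0) (Fp δ μ 3) → False := by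
      intro mi mj hmi1 hmi hmj1 hmj y hy1 hy2
      have hBi : (2:ℝ) ≤ (mi:ℝ) + 1 := by
        have : (1:ℝ) ≤ (mi:ℝ) := by exact_mod_cast hmi1
        linarith
      have hBj : (2:ℝ) ≤ (mj:ℝ) + 1 := by
        have : (1:ℝ) ≤ (mj:ℝ) := by exact_mod_cast hmj1
        linarith
      refine sep_line 1 0 (1+(3/2)*δ) ?_ ?_ ?_ ?_ hy2 hy1
      · simp only [Fp_zero, Matrix.cons_val_zero, Matrix.cons_val_one, Matrix.head_cons]
        linarith [hδ]
      · rw [Fp3_0]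
        linarith [hδ]
      · simp only [Fp_cl, Matrix.cons_val_zero, Matrix.cons_val_one, Matrix.head_cons]
        push_cast
        linarith [mul_pos hδ (by linarith : (0:ℝ) < ((mi:ℝ)+1) - (3/2))]
      · simp only [Fp_cl, Matrix.cons_val_zero, Matrix.cons_val_one, Matrix.head_cons]
        push_cast
        linarith [mul_pos hδ (by linarith : (0:ℝ) < ((mj:ℝ)+1) - (3/2))]
    rcases (by omega : (i = 1 ∧ j = 2) ∨ (i = 2 ∧ j = 1) ∨ (i = 1 ∧ 4 ≤ j) ∨ (j = 1 ∧ 4 ≤ i)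
        ∨ (i = 2 ∧ 4 ≤ j) ∨ (j = 2 ∧ 4 ≤ i) ∨ (4 ≤ i ∧ 4 ≤ j)) with
      ⟨rfl, rfl⟩ | ⟨rfl, rfl⟩ | ⟨rfl, hj4⟩ | ⟨rfl, hi4⟩ | ⟨rfl, hj4⟩ | ⟨rfl, hi4⟩ | ⟨hi4, hj4⟩
    · exact hsepBC x hx2 hx1
    · rw [segment_symm] at hx2
      exact hsepBC x hx2 hx1
    · obtain ⟨mj, rfl⟩ : ∃ m, j = m + 3 := ⟨j - 3, by omega⟩
      exact hsep1cl mj (by omega) hjR x hx2 hx1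
    · obtain ⟨mi, rfl⟩ : ∃ m, i = m + 3 := ⟨i - 3, by omega⟩
      rw [segment_symm] at hx2
      exact hsep1cl mi (by omega) hiR x hx2 hx1
    · obtain ⟨mj, rfl⟩ : ∃ m, j = m + 3 := ⟨j - 3, by omega⟩
      exact hsep2cl mj (by omega) hjR x hx2 hx1
    · obtain ⟨mi, rfl⟩ : ∃ m, i = m + 3 := ⟨i - 3, by omega⟩
      rw [segment_symm] at hx2
      exact hsep2cl mi (by omega) hiR x hx2 hx1
    · obtain ⟨mi, rfl⟩ : ∃ m, i = m + 3 := ⟨i - 3, by omega⟩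
      obtain ⟨mj, rfl⟩ : ∃ m, j = m + 3 := ⟨j - 3, by omega⟩
      exact hsepclcl mi mj (by omega) hiR (by omega) hjR x hx2 hx1


lemma norm_sq_pt (x : Pt) : ‖x‖^2 = (x 0)^2 + (x 1)^2 := by
  rw [EuclideanSpace.norm_eq]
  rw [Real.sq_sqrt (by positivity)]
  simp [Fin.sum_univ_two, sq_abs]

lemma inner_pt (x y : Pt) : ⟪x, y⟫ = x 0 * y 0 + x 1 * y 1 := by
  simp [PiLp.inner_apply, RCLike.inner_apply, Fin.sum_univ_two]
  ring

lemma card_Spts {n : ℕ} {δ μ : ℝ} (hδ : 0 < δ) (hμ : 0 < μ) : (Spts n δ μ).card = n := by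
  rw [Spts, Finset.card_image_of_injOn, Finset.card_range]
  intro a _ b _ hab
  exact Fp_inj hδ hμ hab

lemma genpos_Spts {n : ℕ} {δ μ : ℝ} (hn : 4 ≤ n) (hδ : 0 < δ) (hδn : (n:ℝ) * δ ≤ 1/16)
    (hμ : 0 < μ) (hμn : μ * (n:ℝ)^2 ≤ δ/8) : GenPos (Spts n δ μ) := by
  intro p hp q hq r hr hpq hpr hqr
  obtain ⟨i, hiR, rfl⟩ := Finset.mem_image.1 hp
  obtain ⟨j, hjR, rfl⟩ := Finset.mem_image.1 hq
  obtain ⟨k, hkR, rfl⟩ := Finset.mem_image.1 hr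
  rw [Finset.mem_range] at hiR hjR hkR
  exact noncol (detD hn hδ hδn hμ hμn i j k hiR hjR hkR
    (fun h => hpq (by rw [h])) (fun h => hpr (by rw [h])) (fun h => hqr (by rw [h])))

set_option maxHeartbeats 2000000 in
lemma angle_core {δ μ : ℝ} (hδ : 0 < δ) (hμ : 0 < μ) (ε' : ℝ)
    (hε'1 : 0 < ε') (hε'2 : ε' ≤ Real.pi/12)
    (hμK : μ < (Real.cos (2*Real.pi/3 - ε') + 1/2)/2)
    (d : Pt) (hd0 : d ≠ 0)
    (h1 : InnerProductGeometry.angle d (Fp δ μ 1) < 2*Real.pi/3 - ε')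
    (h2 : InnerProductGeometry.angle d (Fp δ μ 2) < 2*Real.pi/3 - ε')
    (h3 : InnerProductGeometry.angle d (Fp δ μ 3) < 2*Real.pi/3 - ε') : False := by
  have hπ := Real.pi_pos
  set K := Real.cos (2*Real.pi/3 - ε') with hKdef
  have hmemv : 2*Real.pi/3 - ε' ∈ Set.Icc 0 Real.pi := by
    constructor <;> [linarith; linarith]
  -- K > -1/2
  have hK2 : -(1/2 : ℝ) < K := by
    have hc : Real.cos (2*Real.pi/3) = -(1/2) := by
      rw [show 2*Real.pi/3 = Real.pi - Real.pi/3 by ring, Real.cos_pi_sub,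
        Real.cos_pi_div_three]
    have := Real.strictAntiOn_cos hmemv (by constructor <;> linarith)
      (by linarith : 2*Real.pi/3 - ε' < 2*Real.pi/3)
    rw [hc] at this
    exact this
  -- K < 0
  have hK0 : K < 0 := by
    have := Real.strictAntiOn_cos (by constructor <;> linarith : (Real.pi/2) ∈ Set.Icc 0 Real.pi)
      hmemv (by linarith : Real.pi/2 < 2*Real.pi/3 - ε')
    rw [Real.cos_pi_div_two] at this
    exact this
  have hKhalf : (0:ℝ) < K + 1/2 := by linarith
  -- cos bounds from angles
  have cosgt : ∀ v : Pt, InnerProductGeometry.angle d v < 2*Real.pi/3 - ε' →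
      K < ⟪d, v⟫ / (‖d‖ * ‖v‖) := by
    intro v hv
    rw [← InnerProductGeometry.cos_angle]
    exact Real.strictAntiOn_cos
      ⟨InnerProductGeometry.angle_nonneg d v, InnerProductGeometry.angle_le_pi d v⟩ hmemv hv
  have rpos : (0:ℝ) < ‖d‖ := norm_pos_iff.2 hd0
  set r := ‖d‖ with hrdef
  have hr2 : r^2 = d 0^2 + d 1^2 := norm_sq_pt d
  -- norms of the three direction points
  have hnB : ‖Fp δ μ 1‖ = 1 := by
    have h' : ‖Fp δ μ 1‖^2 = 1 := by
      rw [norm_sq_pt, Fp_one]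
      simp only [Matrix.cons_val_zero, Matrix.cons_val_one, Matrix.head_cons]
      nlinarith [s2]
    nlinarith [norm_nonneg (Fp δ μ 1)]
  have hnC : ‖Fp δ μ 2‖ = 1 := by
    have h' : ‖Fp δ μ 2‖^2 = 1 := by
      rw [norm_sq_pt, Fp_two]
      simp only [Matrix.cons_val_zero, Matrix.cons_val_one, Matrix.head_cons]
      nlinarith [s2]
    nlinarith [norm_nonneg (Fp δ μ 2)]
  set A := ‖Fp δ μ 3‖ with hAdef
  have hA2 : A^2 = (1+δ)^2 + μ^2 := by
    have h := norm_sq_pt (Fp δ μ 3)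
    rw [Fp3_0, Fp3_1] at h
    exact h
  have hApos : (0:ℝ) < A := by nlinarith [norm_nonneg (Fp δ μ 3), hδ]
  have hAle : A ≤ 1 + δ + μ := by
    nlinarith [hA2, norm_nonneg (Fp δ μ 3), (by positivity : (0:ℝ) < 1+δ+μ), mul_pos hμ hδ]
  -- inner product inequalities
  have eB := cosgt _ h1
  have eC := cosgt _ h2
  have eA := cosgt _ h3
  rw [inner_pt, hnB, Fp_one] at eB
  rw [inner_pt, hnC, Fp_two] at eC
  rw [inner_pt, ← hAdef, Fp3_0, Fp3_1] at eA
  simp only [Matrix.cons_val_zero, Matrix.cons_val_one, Matrix.head_cons] at eB eC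
  have eB' : K * r < d 0 * (-(1/2)) + d 1 * (Real.sqrt 3/2) := by
    have := (lt_div_iff₀ (by positivity : (0:ℝ) < r * 1)).1 eB
    linarith [this]
  have eC' : K * r < d 0 * (-(1/2)) + d 1 * (-(Real.sqrt 3/2)) := by
    have := (lt_div_iff₀ (by positivity : (0:ℝ) < r * 1)).1 eC
    linarith [this]
  have eA' : K * (r * A) < d 0 * (1+δ) + d 1 * μ :=
    (lt_div_iff₀ (by positivity : (0:ℝ) < r * A)).1 eA
  -- derive d0 + r/2 > 0
  have hd1r : d 1 ≤ r := by nlinarith [sq_nonneg (d 1 - r), sq_nonneg (d 0)]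
  have bound2 : K * r * (1+δ+μ) ≤ K * (r * A) := by
    have h := mul_le_mul_of_nonneg_left hAle (by nlinarith : (0:ℝ) ≤ -(K*r))
    nlinarith [h]
  have st1 : K * r * (1+δ+μ) - μ * r < (1+δ) * d 0 := by
    nlinarith [eA', bound2, mul_le_mul_of_nonneg_left hd1r hμ.le]
  have gap : (0:ℝ) < (K + 1/2) * (1+δ+μ) - (3/2)*μ := by
    nlinarith [mul_nonneg hKhalf.le (by positivity : (0:ℝ) ≤ δ + μ)]
  have st2 : (1+δ) * (d 0 + r/2) > r * ((K + 1/2) * (1+δ+μ) - (3/2)*μ) := by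
    nlinarith [st1]
  have g1 : d 0 + r/2 > 0 := by
    nlinarith [st2, mul_pos rpos gap, hδ]
  have g2 : -(d 0)/2 + (Real.sqrt 3/2) * d 1 + r/2 > 0 := by
    nlinarith [eB', mul_pos rpos hKhalf]
  have g3 : -(d 0)/2 - (Real.sqrt 3/2) * d 1 + r/2 > 0 := by
    nlinarith [eC', mul_pos rpos hKhalf]
  have h4 : (0:ℝ) ≤ r - d 0 := by nlinarith [sq_nonneg (d 1), sq_nonneg (r + d 0)]
  nlinarith [mul_pos (mul_pos g1 g2) g3, mul_nonneg h4 (sq_nonneg (2*(d 0)+r)), s2, rpos]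


/-- For every `ε > 0` and every `n ≥ 4` there is a set of `n` points in general position
such that every triangulation has a vertex whose maximum incident angle is at most
`2π/3 + ε`; hence the bound `2π/3` for triangulations is tight. -/
theorem stmt7 (ε : ℝ) (hε : 0 < ε) (n : ℕ) (hn : 4 ≤ n) :
    ∃ S : Finset Pt, S.card = n ∧ GenPos S ∧
      ∀ T : PSLG S, T.IsTriangulation →
        ∃ p ∈ S, ∀ φ : ℝ, VertexOpen T p φ → φ ≤ 2 * Real.pi / 3 + ε := by
  have hπ := Real.pi_pos
  set ε' : ℝ := min (ε/2) (Real.pi/12) with hε'def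
  have hε'1 : 0 < ε' := lt_min (by linarith) (by linarith)
  have hε'2 : ε' ≤ Real.pi/12 := min_le_right _ _
  have hε'3 : 2*ε' ≤ ε := by
    have := min_le_left (ε/2) (Real.pi/12)
    linarith
  set K : ℝ := Real.cos (2*Real.pi/3 - ε') with hKdef
  have hK2 : -(1/2 : ℝ) < K := by
    have hc : Real.cos (2*Real.pi/3) = -(1/2) := by
      rw [show 2*Real.pi/3 = Real.pi - Real.pi/3 by ring, Real.cos_pi_sub,
        Real.cos_pi_div_three]
    have := Real.strictAntiOn_cos
      (by constructor <;> linarith : 2*Real.pi/3 - ε' ∈ Set.Icc 0 Real.pi)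
      (by constructor <;> linarith : 2*Real.pi/3 ∈ Set.Icc 0 Real.pi)
      (by linarith : 2*Real.pi/3 - ε' < 2*Real.pi/3)
    rw [hc] at this
    exact this
  have hKhalf : (0:ℝ) < K + 1/2 := by linarith
  have hnR : (0:ℝ) < (n:ℝ) := by
    have : (4:ℝ) ≤ (n:ℝ) := by exact_mod_cast hn
    linarith
  set δ : ℝ := ((16:ℝ) * n)⁻¹ with hδdef
  have hδ : 0 < δ := by positivity
  have hδn : (n:ℝ) * δ ≤ 1/16 := by
    rw [hδdef]
    rw [show (n:ℝ) * ((16:ℝ)*n)⁻¹ = 1/16 by field_simp]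
  set μ : ℝ := min (δ/(8*(n:ℝ)^2)) ((K + 1/2)/4) with hμdef
  have hμ : 0 < μ := lt_min (by positivity) (by linarith)
  have hμn : μ * (n:ℝ)^2 ≤ δ/8 := by
    have h1 : μ ≤ δ/(8*(n:ℝ)^2) := min_le_left _ _
    have h2 : (0:ℝ) < (n:ℝ)^2 := by positivity
    rw [show δ/8 = δ/(8*(n:ℝ)^2) * (n:ℝ)^2 by field_simp]
    exact mul_le_mul_of_nonneg_right h1 h2.le
  have hμK : μ < (K + 1/2)/2 := lt_of_le_of_lt (min_le_right _ _) (by linarith)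
  refine ⟨Spts n δ μ, card_Spts hδ hμ, genpos_Spts hn hδ hδn hμ hμn, ?_⟩
  intro T hT
  refine ⟨Fp δ μ 0, mem_Spts 0 (by omega), ?_⟩
  intro φ hVO
  by_contra hφ
  push_neg at hφ
  obtain ⟨d, hd0, hd⟩ := hVO
  have hz : Fp δ μ 0 = 0 := by
    ext i
    fin_cases i <;> rfl
  have e1 := hd (Fp δ μ 1) (force1 hn hδ hδn hμ hμn T hT)
  have e2 := hd (Fp δ μ 2) (force2 hn hδ hδn hμ hμn T hT)
  have e3 := hd (Fp δ μ 3) (force3 hn hδ hδn hμ hμn T hT)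
  rw [hz, sub_zero] at e1 e2 e3
  have hlt : Real.pi - φ/2 < 2*Real.pi/3 - ε' := by linarith
  exact angle_core hδ hμ ε' hε'1 hε'2 hμK d hd0 (lt_of_le_of_lt e1 hlt)
    (lt_of_le_of_lt e2 hlt) (lt_of_le_of_lt e3 hlt)

end
end

section
/- For every n ≥ 3 there exists a set S of n points in general position such that every plane spanning tree on S with maximum vertex degree at most n−2 has some vertex with maximum incident angle at most 3π/2 + ε (for any prescribed ε > 0). -/
open scoped Classical
open EuclideanGeometry

open scoped RealInnerProductSpace

noncomputable def Ppt (t : ℝ) : Pt := (WithLp.equiv 2 (Fin 2 → ℝ)).symm ![t, t ^ 2]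

@[simp] lemma Ppt_apply0 (t : ℝ) : Ppt t 0 = t := by simp [Ppt]
@[simp] lemma Ppt_apply1 (t : ℝ) : Ppt t 1 = t ^ 2 := by simp [Ppt]

lemma Ppt_inj : Function.Injective Ppt := by
  intro a b h
  have := congrArg (fun w : Pt => w 0) h
  simpa using this

lemma abs_comp_le_norm (w : Pt) (i : Fin 2) : |w i| ≤ ‖w‖ := by
  rw [EuclideanSpace.norm_eq, Fin.sum_univ_two]
  rw [← Real.sqrt_sq_eq_abs]
  apply Real.sqrt_le_sqrt
  fin_cases i <;> simp [Real.norm_eq_abs, sq_abs] <;> positivity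

lemma inner_comp (u v : Pt) : (inner ℝ u v : ℝ) = u 0 * v 0 + u 1 * v 1 := by
  rw [PiLp.inner_apply, Fin.sum_univ_two]
  simp [RCLike.inner_apply]; ring

lemma parabola_gp {a b c : ℝ} (hab : a ≠ b) (hac : a ≠ c) (hbc : b ≠ c) :
    ¬ Collinear ℝ ({Ppt a, Ppt b, Ppt c} : Set Pt) := by
  intro h
  rw [collinear_iff_of_mem (Set.mem_insert _ _)] at h
  obtain ⟨v, hv⟩ := h
  obtain ⟨tb, htb⟩ := hv (Ppt b) (by simp)
  obtain ⟨tc, htc⟩ := hv (Ppt c) (by simp)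
  have hb0 : b = tb * v 0 + a := by
    have := congrArg (fun w : Pt => w 0) htb
    simpa [PiLp.add_apply, PiLp.smul_apply] using this
  have hb1 : b ^ 2 = tb * v 1 + a ^ 2 := by
    have := congrArg (fun w : Pt => w 1) htb
    simpa [PiLp.add_apply, PiLp.smul_apply] using this
  have hc0 : c = tc * v 0 + a := by
    have := congrArg (fun w : Pt => w 0) htc
    simpa [PiLp.add_apply, PiLp.smul_apply] using this
  have hc1 : c ^ 2 = tc * v 1 + a ^ 2 := by
    have := congrArg (fun w : Pt => w 1) htc
    simpa [PiLp.add_apply, PiLp.smul_apply] using this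
  have hb : b - a = tb * v 0 := by linarith
  have hc : c - a = tc * v 0 := by linarith
  have hb' : b ^ 2 - a ^ 2 = tb * v 1 := by linarith
  have hc' : c ^ 2 - a ^ 2 = tc * v 1 := by linarith
  have e1 : (b - a) * (c ^ 2 - a ^ 2) = (c - a) * (b ^ 2 - a ^ 2) := by
    rw [hb, hc, hb', hc']; ring
  have key : (b - a) * (c - a) * (c - b) = 0 := by linear_combination e1
  have h1 : b - a ≠ 0 := sub_ne_zero.2 (Ne.symm hab)
  have h2 : c - a ≠ 0 := sub_ne_zero.2 (Ne.symm hac)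
  have h3 : c - b ≠ 0 := sub_ne_zero.2 (Ne.symm hbc)
  exact (mul_ne_zero (mul_ne_zero h1 h2) h3) key

lemma bessel_unit (d u v : Pt) (hd : ‖d‖ = 1) (hu : ‖u‖ = 1) (hv : ‖v‖ = 1) :
    (inner ℝ d u : ℝ) ^ 2 + (inner ℝ d v : ℝ) ^ 2 ≤ 1 + |(inner ℝ u v : ℝ)| := by
  set s : ℝ := inner ℝ d u with hs
  set t : ℝ := inner ℝ d v with ht
  set c : ℝ := inner ℝ u v with hc
  set w : Pt := s • u + t • v with hw
  have hdw : (inner ℝ d w : ℝ) = s ^ 2 + t ^ 2 := by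
    rw [hw, inner_add_right, real_inner_smul_right, real_inner_smul_right, ← hs, ← ht]; ring
  have hcs : (inner ℝ d w : ℝ) ≤ ‖d‖ * ‖w‖ := real_inner_le_norm d w
  rw [hdw, hd, one_mul] at hcs
  have hnw : ‖w‖ ^ 2 = s ^ 2 + t ^ 2 + 2 * s * t * c := by
    rw [hw, norm_add_sq_real, norm_smul, norm_smul, real_inner_smul_left,
      real_inner_smul_right, hu, hv, ← hc]
    simp only [Real.norm_eq_abs, mul_one]
    rw [sq_abs, sq_abs]; ring
  have hKey : (s ^ 2 + t ^ 2) ^ 2 ≤ s ^ 2 + t ^ 2 + 2 * s * t * c := by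
    have := pow_le_pow_left₀ (by positivity) hcs 2
    rwa [hnw] at this
  have h2st : 2 * s * t * c ≤ (s ^ 2 + t ^ 2) * |c| := by
    rcases le_or_gt 0 c with h | h
    · nlinarith [sq_nonneg (s - t), sq_nonneg (s + t), abs_of_nonneg h]
    · nlinarith [sq_nonneg (s - t), sq_nonneg (s + t), abs_of_neg h]
  have hK : (s ^ 2 + t ^ 2) ^ 2 ≤ (s ^ 2 + t ^ 2) * (1 + |c|) := by nlinarith
  rcases eq_or_lt_of_le (show (0:ℝ) ≤ s ^ 2 + t ^ 2 by positivity) with h0 | h0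
  · rw [← h0]; positivity
  · nlinarith

lemma inner_div_norm (d u : Pt) :
    (inner ℝ ((‖d‖⁻¹ : ℝ) • d) ((‖u‖⁻¹ : ℝ) • u) : ℝ) = (inner ℝ d u : ℝ) / (‖d‖ * ‖u‖) := by
  rw [real_inner_smul_left, real_inner_smul_right]
  field_simp

lemma bessel (d u v : Pt) (hd : d ≠ 0) (hu : u ≠ 0) (hv : v ≠ 0) :
    ((inner ℝ d u : ℝ) / (‖d‖ * ‖u‖)) ^ 2 + ((inner ℝ d v : ℝ) / (‖d‖ * ‖v‖)) ^ 2
      ≤ 1 + |(inner ℝ u v : ℝ) / (‖u‖ * ‖v‖)| := by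
  have h := bessel_unit ((‖d‖⁻¹ : ℝ) • d) ((‖u‖⁻¹ : ℝ) • u) ((‖v‖⁻¹ : ℝ) • v)
    (norm_smul_inv_norm hd) (norm_smul_inv_norm hu) (norm_smul_inv_norm hv)
  rwa [inner_div_norm, inner_div_norm, inner_div_norm] at h

lemma reach_config {α : Type*} (R : α → α → Prop) (c p : α)
    (h : Relation.ReflTransGen R c p) (hcp : ¬ R c p) (hne : c ≠ p) :
    ∃ q s, R q p ∧ R s q ∧ s ≠ p ∧ q ≠ p := by
  suffices H : ∀ x, Relation.ReflTransGen R c x →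
      (∃ q s, R q p ∧ R s q ∧ s ≠ p ∧ q ≠ p) ∨ (x ≠ p ∧ (x = c ∨ ∃ s, R s x ∧ s ≠ p)) by
    rcases H p h with h1 | h2
    · exact h1
    · exact absurd rfl h2.1
  intro x hx
  induction hx with
  | refl => exact Or.inr ⟨hne, Or.inl rfl⟩
  | @tail x y hcx hxy ih =>
    rcases ih with found | ⟨hxp, hx'⟩
    · exact Or.inl found
    · by_cases hyp : y = p
      · subst hyp
        rcases hx' with rfl | ⟨s, hs, hsp⟩
        · exact absurd hxy hcp
        · exact Or.inl ⟨x, s, hxy, hs, hsp, hxp⟩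
      · exact Or.inr ⟨hyp, Or.inr ⟨x, hxy, hxp⟩⟩

set_option maxHeartbeats 2000000 in
/-- For every `ε > 0` and every `n ≥ 3` there is a set `S` of `n` points in general
position such that every plane spanning tree on `S` of maximum vertex degree at most
`n - 2` has a vertex whose maximum incident angle is at most `3π/2 + ε`. -/
theorem stmt11 (ε : ℝ) (hε : 0 < ε) (n : ℕ) (hn : 3 ≤ n) :
    ∃ S : Finset Pt, S.card = n ∧ GenPos S ∧
      ∀ T : PSLG S, T.IsSpanningTree → (∀ p ∈ S, T.deg p ≤ n - 2) →
        ∃ p ∈ S, ∀ φ : ℝ, VertexOpen T p φ → φ ≤ 3 * Real.pi / 2 + ε := by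
  classical
  set η : ℝ := min ε 1 with hηdef
  have hη0 : 0 < η := lt_min hε one_pos
  have hη1 : η ≤ 1 := min_le_right _ _
  have hηε : η ≤ ε := min_le_left _ _
  have hn3 : (3:ℝ) ≤ (n:ℝ) := by exact_mod_cast hn
  have hn0 : (0:ℝ) < (n:ℝ) := by linarith
  set δ : ℝ := η / (8 * n) with hδdef
  have hδ0 : 0 < δ := div_pos hη0 (by linarith)
  set M : ℝ := 8 * n / η with hMdef
  have hM24 : 24 ≤ M := by rw [hMdef, le_div_iff₀ hη0]; linarith
  have hMη : η * M = 8 * n := by rw [hMdef]; field_simp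
  have hnδ : (n:ℝ) * δ = η / 8 := by rw [hδdef]; field_simp
  set xs : ℕ → ℝ := fun i => if i = n - 1 then M else i * δ with hxs
  have hxsM : xs (n-1) = M := by rw [hxs]; simp
  have hxs_small : ∀ i < n, i ≠ n - 1 → 0 ≤ xs i ∧ xs i ≤ η / 8 := by
    intro i hi hine
    have hix : xs i = i * δ := by rw [hxs]; simp [hine]
    constructor
    · rw [hix]; positivity
    · have hin : (i:ℝ) ≤ n := by exact_mod_cast hi.le
      rw [hix]
      calc (i:ℝ) * δ ≤ n * δ := mul_le_mul_of_nonneg_right hin hδ0.le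
        _ = η / 8 := hnδ
  have hMgt : ∀ i < n, i ≠ n - 1 → xs i < M := by
    intro i hi hine
    have := (hxs_small i hi hine).2
    linarith
  have hinj : Set.InjOn (fun i => Ppt (xs i)) ↑(Finset.range n) := by
    intro i hi j hj hij
    simp only [Finset.coe_range, Set.mem_Iio] at hi hj
    have hx : xs i = xs j := Ppt_inj hij
    by_cases hi1 : i = n - 1 <;> by_cases hj1 : j = n - 1
    · omega
    · exfalso; rw [hi1, hxsM] at hx; exact absurd hx.symm (ne_of_lt (hMgt j hj hj1))
    · exfalso; rw [hj1, hxsM] at hx; exact absurd hx (ne_of_lt (hMgt i hi hi1))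
    · have hix : xs i = i * δ := by rw [hxs]; simp [hi1]
      have hjx : xs j = j * δ := by rw [hxs]; simp [hj1]
      rw [hix, hjx] at hx
      have : (i:ℝ) = (j:ℝ) := mul_right_cancel₀ hδ0.ne' hx
      exact_mod_cast this
  have hScard : ((Finset.range n).image (fun i => Ppt (xs i))).card = n := by
    rw [Finset.card_image_of_injOn hinj, Finset.card_range]
  refine ⟨(Finset.range n).image (fun i => Ppt (xs i)), hScard, ?_, ?_⟩
  · intro p hp q hq r hr hpq hpr hqr
    obtain ⟨i, hi, rfl⟩ := Finset.mem_image.1 hp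
    obtain ⟨j, hj, rfl⟩ := Finset.mem_image.1 hq
    obtain ⟨k, hk, rfl⟩ := Finset.mem_image.1 hr
    exact parabola_gp (fun h => hpq (congrArg Ppt h)) (fun h => hpr (congrArg Ppt h))
      (fun h => hqr (congrArg Ppt h))
  · intro T hT hdeg
    obtain ⟨hconn, -⟩ := hT
    have hpbigS : Ppt M ∈ (Finset.range n).image (fun i => Ppt (xs i)) :=
      Finset.mem_image.2 ⟨n-1, Finset.mem_range.2 (by omega), by rw [hxsM]⟩
    have hex : ∃ c ∈ (Finset.range n).image (fun i => Ppt (xs i)),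
        c ≠ Ppt M ∧ (c, Ppt M) ∉ T.E := by
      by_contra hcontra
      push_neg at hcontra
      have hsub : (((Finset.range n).image (fun i => Ppt (xs i))).erase (Ppt M)).card ≤
          T.deg (Ppt M) := by
        apply Finset.card_le_card_of_injOn (fun c => (Ppt M, c))
        · intro c hc
          simp only [Finset.mem_filter]
          exact Finset.mem_filter.2 ⟨T.symm _ (hcontra c (Finset.mem_of_mem_erase hc) (Finset.ne_of_mem_erase hc)),
            rfl⟩
        · intro a _ b _ hab
          exact congrArg Prod.snd hab
      rw [Finset.card_erase_of_mem hpbigS, hScard] at hsub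
      have := hdeg (Ppt M) hpbigS
      omega
    obtain ⟨c, hcS, hcne, hcE⟩ := hex
    obtain ⟨q, s, hqp, hsq, hsp, hqnp⟩ := reach_config (fun a b => (a,b) ∈ T.E) c (Ppt M)
      (hconn c hcS (Ppt M) hpbigS) hcE hcne
    have hqS : q ∈ (Finset.range n).image (fun i => Ppt (xs i)) := (T.endpts _ hqp).1
    have hsS : s ∈ (Finset.range n).image (fun i => Ppt (xs i)) := (T.endpts _ hsq).1
    have hsnq : s ≠ q := T.ne (s, q) hsq
    have hqs : (q, s) ∈ T.E := T.symm _ hsq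
    obtain ⟨i, hi, hqi⟩ := Finset.mem_image.1 hqS
    obtain ⟨j, hj, hsj⟩ := Finset.mem_image.1 hsS
    rw [Finset.mem_range] at hi hj
    subst hqi hsj
    have hine : i ≠ n - 1 := by rintro rfl; exact hqnp (by rw [hxsM])
    have hjne : j ≠ n - 1 := by rintro rfl; exact hsp (by rw [hxsM])
    set a : ℝ := xs i with ha'
    set b : ℝ := xs j with hb'
    obtain ⟨ha0, ha8⟩ := hxs_small i hi hine
    obtain ⟨hb0, hb8⟩ := hxs_small j hj hjne
    have hab : a ≠ b := fun h => hsnq (congrArg Ppt h.symm)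
    have hMa : a < M := hMgt i hi hine
    refine ⟨Ppt a, hqS, ?_⟩
    intro φ hopen
    obtain ⟨d, hd, hang⟩ := hopen
    by_contra hcontra
    push_neg at hcontra
    have h1 : InnerProductGeometry.angle d (Ppt M - Ppt a) ≤ Real.pi - φ / 2 := hang (Ppt M) hqp
    have h2 : InnerProductGeometry.angle d (Ppt b - Ppt a) ≤ Real.pi - φ / 2 := hang (Ppt b) hqs
    set u : Pt := Ppt M - Ppt a with hu'
    set v : Pt := Ppt b - Ppt a with hv'
    have hu_ne : u ≠ 0 := sub_ne_zero.2 (Ne.symm hqnp)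
    have hv_ne : v ≠ 0 := sub_ne_zero.2 hsnq
    have hu0 : u 0 = M - a := by rw [hu', PiLp.sub_apply]; simp
    have hu1 : u 1 = M ^ 2 - a ^ 2 := by rw [hu', PiLp.sub_apply]; simp
    have hv0 : v 0 = b - a := by rw [hv', PiLp.sub_apply]; simp
    have hv1 : v 1 = b ^ 2 - a ^ 2 := by rw [hv', PiLp.sub_apply]; simp
    have hIval : (inner ℝ u v : ℝ) = (M - a) * (b - a) * (1 + (M + a) * (a + b)) := by
      rw [inner_comp, hu0, hu1, hv0, hv1]; ring
    have hnu : M ^ 2 - a ^ 2 ≤ ‖u‖ := by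
      have h := abs_comp_le_norm u 1
      rw [hu1] at h
      exact (le_abs_self _).trans h
    have hnv : |b - a| ≤ ‖v‖ := by
      have h := abs_comp_le_norm v 0
      rwa [hv0] at h
    have hMa2 : 0 < M ^ 2 - a ^ 2 :=
      lt_of_lt_of_eq (mul_pos (show (0:ℝ) < M - a by linarith) (show (0:ℝ) < M + a by linarith))
        (by ring)
    have hba : 0 < |b - a| := abs_pos.2 (sub_ne_zero.2 (Ne.symm hab))
    have hcube : η ^ 3 ≤ η := by
      have h2 : η ^ 2 ≤ 1 := pow_le_one₀ hη0.le hη1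
      calc η ^ 3 = η * η ^ 2 := by ring
        _ ≤ η * 1 := mul_le_mul_of_nonneg_left h2 hη0.le
        _ = η := mul_one η
    have hsin : 3 * η / 4 ≤ Real.sin η := by
      have := Real.sin_gt_sub_cube hη0
      linarith
    have hMa0 : (0:ℝ) ≤ M + a := by linarith
    have hkey : 1 + (M + a) * (a + b) ≤ Real.sin η * (M + a) := by
      have t1 : 3 * η / 4 * (M + a) ≤ Real.sin η * (M + a) :=
        mul_le_mul_of_nonneg_right hsin hMa0
      have t2 : (M + a) * (a + b) ≤ (M + a) * (η / 4) :=
        mul_le_mul_of_nonneg_left (by linarith) hMa0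
      have t3 : (M + a) * (η / 4) = 2 * n + η * a / 4 := by linear_combination hMη / 4
      have t5 : 3 * η / 4 * (M + a) = 6 * n + 3 * (η * a) / 4 := by
        linear_combination 3 / 4 * hMη
      have t6 : 0 ≤ η * a := mul_nonneg hη0.le ha0
      have t4 : η * a ≤ 1 := by
        calc η * a ≤ 1 * a := mul_le_mul_of_nonneg_right hη1 ha0
          _ = a := one_mul a
          _ ≤ 1 := by linarith
      linarith only [t1, t2, t3, t4, t5, t6, hn3]
    have habs : |(inner ℝ u v : ℝ)| ≤ (M - a) * |b - a| * (Real.sin η * (M + a)) := by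
      rw [hIval, abs_mul, abs_mul, abs_of_pos (show (0:ℝ) < M - a by linarith),
        abs_of_pos (show (0:ℝ) < 1 + (M + a) * (a + b) by
          have := mul_nonneg hMa0 (show (0:ℝ) ≤ a + b by linarith); linarith)]
      have hfac : (0:ℝ) ≤ (M - a) * |b - a| := mul_nonneg (by linarith) (abs_nonneg _)
      exact mul_le_mul_of_nonneg_left hkey hfac
    have hnormprod : (M ^ 2 - a ^ 2) * |b - a| ≤ ‖u‖ * ‖v‖ :=
      mul_le_mul hnu hnv (abs_nonneg _) (norm_nonneg _)
    have hprodpos : (0:ℝ) < ‖u‖ * ‖v‖ := lt_of_lt_of_le (mul_pos hMa2 hba) hnormprod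
    have hcbound : |(inner ℝ u v : ℝ) / (‖u‖ * ‖v‖)| ≤ Real.sin η := by
      rw [abs_div, abs_of_pos hprodpos, div_le_iff₀ hprodpos]
      calc |(inner ℝ u v : ℝ)| ≤ (M - a) * |b - a| * (Real.sin η * (M + a)) := habs
        _ = Real.sin η * ((M ^ 2 - a ^ 2) * |b - a|) := by ring
        _ ≤ Real.sin η * (‖u‖ * ‖v‖) :=
          mul_le_mul_of_nonneg_left hnormprod (by linarith)
        _ = Real.sin η * (‖u‖ * ‖v‖) := rfl
    set α : ℝ := Real.pi - φ / 2 with hα'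
    have hα0 : 0 ≤ α := le_trans (InnerProductGeometry.angle_nonneg d u) h1
    have hαlt : α < Real.pi / 4 - η / 2 := by
      rw [hα']; linarith
    have hβπ : Real.pi / 4 - η / 2 ≤ Real.pi := by linarith [Real.pi_pos]
    have hαπ : α ≤ Real.pi := le_trans hαlt.le hβπ
    have hcosu : Real.cos α ≤ (inner ℝ d u : ℝ) / (‖d‖ * ‖u‖) := by
      rw [← InnerProductGeometry.cos_angle]
      exact Real.cos_le_cos_of_nonneg_of_le_pi (InnerProductGeometry.angle_nonneg d u) hαπ h1
    have hcosv : Real.cos α ≤ (inner ℝ d v : ℝ) / (‖d‖ * ‖v‖) := by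
      rw [← InnerProductGeometry.cos_angle]
      exact Real.cos_le_cos_of_nonneg_of_le_pi (InnerProductGeometry.angle_nonneg d v) hαπ h2
    have hβα : Real.cos (Real.pi / 4 - η / 2) < Real.cos α :=
      Real.cos_lt_cos_of_nonneg_of_le_pi hα0 hβπ hαlt
    have hcosβpos : 0 < Real.cos (Real.pi / 4 - η / 2) :=
      Real.cos_pos_of_mem_Ioo ⟨by linarith [Real.pi_gt_three], by linarith [Real.pi_gt_three]⟩
    have hcos2 : Real.cos (Real.pi / 4 - η / 2) ^ 2 = 1 / 2 + Real.sin η / 2 := by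
      rw [Real.cos_sq, show 2 * (Real.pi / 4 - η / 2) = Real.pi / 2 - η by ring,
        Real.cos_pi_div_two_sub]
    have hsu2 : Real.cos (Real.pi / 4 - η / 2) ^ 2 < ((inner ℝ d u : ℝ) / (‖d‖ * ‖u‖)) ^ 2 :=
      pow_lt_pow_left₀ (lt_of_lt_of_le hβα hcosu) hcosβpos.le (by norm_num)
    have hsv2 : Real.cos (Real.pi / 4 - η / 2) ^ 2 < ((inner ℝ d v : ℝ) / (‖d‖ * ‖v‖)) ^ 2 :=
      pow_lt_pow_left₀ (lt_of_lt_of_le hβα hcosv) hcosβpos.le (by norm_num)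
    have hbes := bessel d u v hd hu_ne hv_ne
    linarith only [hbes, hcbound, hsu2, hsv2, hcos2]
end
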